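/- Let Λ(ρ) = pρ + ((1−p)/3)(σₓρσₓ + σᵧρσᵧ + σ_zρσ_z) be the single-qubit depolarizing channel. When Λ⊗Λ is applied to the pure state |ψ⟩ = cos(x/2)|00⟩ + sin(x/2)|11⟩, the output state has negative partial transpose (is entangled) if and only if sin x > 4(1+2p)(1−p)/(4p−1)² (for 4p−1 ≠ 0). -/

import Mathlib

open Matrix Kronecker Complex ComplexOrder

/-- Pauli matrices. -/
noncomputable def sx : Matrix (Fin 2) (Fin 2) ℂ := !![0, 1; 1, 0]
noncomputable def sy : Matrix (Fin 2) (Fin 2) ℂ := !![0, -Complex.I; Complex.I, 0]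
noncomputable def sz : Matrix (Fin 2) (Fin 2) ℂ := !![1, 0; 0, -1]

/-- Single-qubit depolarizing channel Λ(ρ) = pρ + ((1−p)/3)(σₓρσₓ + σᵧρσᵧ + σ_zρσ_z). -/
noncomputable def depol (p : ℝ) (ρ : Matrix (Fin 2) (Fin 2) ℂ) : Matrix (Fin 2) (Fin 2) ℂ :=
  (p : ℂ) • ρ + (((1 - p) / 3 : ℝ) : ℂ) • (sx * ρ * sx + sy * ρ * sy + sz * ρ * sz)

/-- Kraus operators of the depolarizing channel. -/
noncomputable def depolKraus (p : ℝ) : Fin 4 → Matrix (Fin 2) (Fin 2) ℂ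
  | 0 => (Real.sqrt p : ℂ) • 1
  | 1 => (Real.sqrt ((1 - p) / 3) : ℂ) • sx
  | 2 => (Real.sqrt ((1 - p) / 3) : ℂ) • sy
  | 3 => (Real.sqrt ((1 - p) / 3) : ℂ) • sz

/-- The two-qubit pure state |ψ⟩ = cos(x/2)|00⟩ + sin(x/2)|11⟩ as a vector. -/
noncomputable def psi (x : ℝ) : Fin 2 × Fin 2 → ℂ := fun i =>
  if i = (0, 0) then (Real.cos (x / 2) : ℂ)
  else if i = (1, 1) then (Real.sin (x / 2) : ℂ) else 0

/-- The output state (Λ ⊗ Λ)(|ψ⟩⟨ψ|), expressed via the Kraus representation. -/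
noncomputable def outState (p x : ℝ) : Matrix (Fin 2 × Fin 2) (Fin 2 × Fin 2) ℂ :=
  ∑ i : Fin 4, ∑ j : Fin 4,
    (depolKraus p i ⊗ₖ depolKraus p j) * vecMulVec (psi x) (star (psi x)) *
      (depolKraus p i ⊗ₖ depolKraus p j)ᴴ

/-- Partial transpose on the second qubit. -/
def partialTranspose (A : Matrix (Fin 2 × Fin 2) (Fin 2 × Fin 2) ℂ) :
    Matrix (Fin 2 × Fin 2) (Fin 2 × Fin 2) ℂ :=
  Matrix.of fun i j => A (i.1, j.2) (j.1, i.2)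

/- Auxiliary explicit entries of the output state. -/
noncomputable def E00 (p x : ℝ) : ℝ :=
  (p + (1-p)/3)^2 * Real.cos (x/2)^2 + 4*((1-p)/3)^2 * Real.sin (x/2)^2
noncomputable def E11 (p x : ℝ) : ℝ :=
  (p + (1-p)/3)^2 * Real.sin (x/2)^2 + 4*((1-p)/3)^2 * Real.cos (x/2)^2
noncomputable def Dm (p x : ℝ) : ℝ :=
  2*((1-p)/3)*(p+(1-p)/3) * Real.cos (x/2)^2 + 2*((1-p)/3)*(p+(1-p)/3) * Real.sin (x/2)^2
noncomputable def Bm (p x : ℝ) : ℝ :=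
  (p - (1-p)/3)^2 * Real.cos (x/2) * Real.sin (x/2)

/-- Explicit matrix of entries of the output state. -/
noncomputable def Ment (p x : ℝ) : (Fin 2 × Fin 2) → (Fin 2 × Fin 2) → ℝ := fun i j =>
  if i = (0,0) then (if j = (0,0) then E00 p x else if j = (1,1) then Bm p x else 0)
  else if i = (0,1) then (if j = (0,1) then Dm p x else 0)
  else if i = (1,0) then (if j = (1,0) then Dm p x else 0)
  else (if j = (0,0) then Bm p x else if j = (1,1) then E11 p x else 0)

lemma Ment_symm (p x : ℝ) (i j : Fin 2 × Fin 2) : Ment p x j i = Ment p x i j := by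
  fin_cases i <;> fin_cases j <;> simp (config := { decide := true }) [Ment]

set_option maxHeartbeats 8000000 in
lemma out_apply (p x : ℝ) (hp0 : 0 ≤ p) (hp1 : p ≤ 1) (i j : Fin 2 × Fin 2) :
    outState p x i j = ((Ment p x i j : ℝ) : ℂ) := by
  have hr : (0:ℝ) ≤ (1 - p)/3 := by linarith
  have h1p : (0:ℝ) ≤ 1 - p := by linarith
  have hsp : ((Real.sqrt p : ℂ))^2 = (p:ℂ) := by
    norm_cast; exact Real.sq_sqrt hp0
  have hsr : ((Real.sqrt ((1-p)/3) : ℂ))^2 = (((1-p)/3 : ℝ):ℂ) := by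
    norm_cast; exact Real.sq_sqrt hr
  have hsp4 : ((Real.sqrt p : ℂ))^4 = (p:ℂ)^2 := by
    rw [show (4:ℕ) = 2*2 from rfl, pow_mul, hsp]
  have hsr4 : ((Real.sqrt ((1-p)/3) : ℂ))^4 = (((1-p)/3 : ℝ):ℂ)^2 := by
    rw [show (4:ℕ) = 2*2 from rfl, pow_mul, hsr]
  have ha : ((Real.sqrt (1-p) : ℂ))^2 = ((1-p : ℝ) : ℂ) := by
    norm_cast; exact Real.sq_sqrt h1p
  have hb : ((Real.sqrt 3 : ℂ))^2 = (3:ℂ) := by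
    norm_cast; rw [Real.sq_sqrt]; norm_num
  have ha4 : ((Real.sqrt (1-p) : ℂ))^4 = ((1-p : ℝ) : ℂ)^2 := by
    rw [show (4:ℕ) = 2*2 from rfl, pow_mul, ha]
  have hb4 : ((Real.sqrt 3 : ℂ))^4 = (3:ℂ)^2 := by
    rw [show (4:ℕ) = 2*2 from rfl, pow_mul, hb]
  have hI4 : Complex.I^4 = 1 := by
    rw [show (4:ℕ) = 2*2 from rfl, pow_mul, Complex.I_sq]; norm_num
  fin_cases i <;> fin_cases j <;>
  · simp only [outState, Fin.sum_univ_four, Matrix.add_apply, Matrix.mul_apply,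
      Fintype.sum_prod_type, Fin.sum_univ_two, kroneckerMap_apply, conjTranspose_apply,
      vecMulVec_apply, Pi.star_apply, depolKraus, Matrix.smul_apply, Matrix.one_apply, psi,
      sx, sy, sz, Matrix.cons_val', Matrix.cons_val_zero, Matrix.cons_val_one, Matrix.head_cons,
      Matrix.empty_val', Matrix.cons_val_fin_one, Matrix.head_fin_const, smul_eq_mul,
      star_mul', Complex.conj_ofReal, star_one, star_zero, mul_zero, zero_mul, mul_one, one_mul,
      add_zero, zero_add, if_true, if_false, Prod.mk.injEq, Fin.isValue, star_trivial,
      Ment, E00, E11, Dm, Bm]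
    norm_num
    try simp only [← Complex.cos_conj, ← Complex.sin_conj, map_div₀, Complex.conj_ofReal,
      map_ofNat]
    try ring_nf
    try simp only [inv_pow, ha, hb, ha4, hb4, hsp, hsp4, hsr, hsr4, Complex.I_sq, hI4]
    try push_cast
    try ring

set_option maxHeartbeats 4000000 in
theorem stmt16 (p x : ℝ) (hp0 : 0 ≤ p) (hp1 : p ≤ 1) (hx0 : 0 ≤ x) (hxπ : x ≤ Real.pi)
    (hp : 4 * p - 1 ≠ 0) :
    ¬ (partialTranspose (outState p x)).PosSemidef ↔
      Real.sin x > 4 * (1 + 2 * p) * (1 - p) / (4 * p - 1) ^ 2 := by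
  have hpi := Real.pi_pos
  have hc : 0 ≤ Real.cos (x/2) :=
    Real.cos_nonneg_of_mem_Icc ⟨by linarith, by linarith⟩
  have hs : 0 ≤ Real.sin (x/2) :=
    Real.sin_nonneg_of_nonneg_of_le_pi (by linarith) (by linarith)
  have hpyth : Real.sin (x/2)^2 + Real.cos (x/2)^2 = 1 := Real.sin_sq_add_cos_sq _
  have hsinx : Real.sin x = 2 * Real.sin (x/2) * Real.cos (x/2) := by
    have h := Real.sin_two_mul (x/2)
    ring_nf at h ⊢
    rw [← h]
  have hsq : (0:ℝ) < (4*p-1)^2 := by positivity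
  have hDm : Dm p x = 2*(1-p)*(1+2*p)/9 := by unfold Dm; nlinarith [hpyth]
  have hBm : Bm p x = (4*p-1)^2 * Real.sin x / 18 := by unfold Bm; rw [hsinx]; ring
  have hE00 : 0 ≤ E00 p x := by unfold E00; positivity
  have hE11 : 0 ≤ E11 p x := by unfold E11; positivity
  have hBm0 : 0 ≤ Bm p x := mul_nonneg (mul_nonneg (sq_nonneg _) hc) hs
  have hout := out_apply p x hp0 hp1
  constructor
  · intro hn
    by_contra hle
    push_neg at hle
    apply hn
    have hDB : Bm p x ≤ Dm p x := by
      rw [le_div_iff₀ hsq] at hle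
      rw [hBm, hDm]; nlinarith [hle]
    rw [posSemidef_iff_dotProduct_mulVec]
    constructor
    · ext i j
      simp only [conjTranspose_apply, partialTranspose, Matrix.of_apply, hout,
        RCLike.star_def, Complex.conj_ofReal]
      exact congrArg _ (Ment_symm p x (i.1, j.2) (j.1, i.2))
    · intro v
      simp only [dotProduct, Matrix.mulVec, Fintype.sum_prod_type, Fin.sum_univ_two,
        Pi.star_apply, partialTranspose, Matrix.of_apply, hout]
      simp (config := { decide := true }) only [Ment, if_true, if_false]
      rw [Complex.le_def]
      constructor
      · simp only [Complex.add_re, Complex.mul_re, Complex.add_im, Complex.mul_im,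
          Complex.ofReal_re, Complex.ofReal_im, Complex.zero_re, Complex.zero_im,
          RCLike.star_def, Complex.conj_re, Complex.conj_im, Complex.ofReal_zero,
          mul_zero, zero_mul, add_zero, zero_add, neg_zero, zero_sub, sub_zero, neg_neg]
        ring_nf
        nlinarith [mul_nonneg hE00 (by positivity : (0:ℝ) ≤ (v (0,0)).re^2 + (v (0,0)).im^2),
          mul_nonneg hE11 (by positivity : (0:ℝ) ≤ (v (1,1)).re^2 + (v (1,1)).im^2),
          mul_nonneg (by linarith : (0:ℝ) ≤ Dm p x - Bm p x)
            (by positivity : (0:ℝ) ≤ (v (0,1)).re^2 + (v (0,1)).im^2 + (v (1,0)).re^2 + (v (1,0)).im^2),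
          mul_nonneg hBm0
            (by positivity : (0:ℝ) ≤ ((v (0,1)).re + (v (1,0)).re)^2 + ((v (0,1)).im + (v (1,0)).im)^2)]
      · simp only [Complex.add_im, Complex.add_re, Complex.mul_im, Complex.mul_re,
          Complex.ofReal_re, Complex.ofReal_im, Complex.zero_im, Complex.ofReal_zero,
          RCLike.star_def, Complex.conj_re, Complex.conj_im,
          mul_zero, zero_mul, add_zero, zero_add, neg_zero]
        ring
  · intro hgt hPSD
    have hgt2 : 4*(1+2*p)*(1-p) < Real.sin x * (4*p-1)^2 := by
      rw [gt_iff_lt, div_lt_iff₀ hsq] at hgt; linarith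
    have hBD : Dm p x < Bm p x := by rw [hBm, hDm]; nlinarith [hgt2]
    have h0 := hPSD.dotProduct_mulVec_nonneg (fun i => if i = (0,1) then 1 else if i = (1,0) then -1 else 0)
    simp only [dotProduct, Matrix.mulVec, Fintype.sum_prod_type, Fin.sum_univ_two,
      Pi.star_apply, partialTranspose, Matrix.of_apply, hout] at h0
    simp (config := { decide := true }) only [Ment, if_true, if_false,
      apply_ite (star : ℂ → ℂ), star_one, star_neg, star_zero, mul_one, mul_zero,
      mul_neg, one_mul, neg_mul, zero_mul, add_zero, zero_add] at h0
    rw [Complex.le_def] at h0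
    obtain ⟨h0re, -⟩ := h0
    simp only [Complex.add_re, Complex.mul_re, Complex.sub_re, Complex.neg_re,
      Complex.ofReal_re, Complex.ofReal_im, Complex.zero_re, Complex.one_re,
      Complex.one_im, Complex.zero_im, mul_zero, zero_mul, sub_zero, add_zero,
      mul_one, neg_zero] at h0re
    linarith [h0re]
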